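/- Let d be an even positive integer, let δ ≤ d/4 be a positive integer, and let 0 < p ≤ q. Then D₂(x⁺, x⁻) ≥ q√d; that is, for every θ ∈ ℝ, ‖x⁺ − e^{iθ}x⁻‖₂² ≥ d·q². -/

import Mathlib

open scoped BigOperators

noncomputable section

/-- Map an integer to `Fin d` by reduction mod `d` (requires `0 < d`). -/
def intToFin (d : ℕ) (hd : 0 < d) (z : ℤ) : Fin d :=
  ⟨(z % (d : ℤ)).toNat, by
    have h1 : 0 ≤ z % (d : ℤ) := Int.emod_nonneg z (by exact_mod_cast hd.ne')
    have h2 : z % (d : ℤ) < (d : ℤ) := Int.emod_lt_of_pos z (by exact_mod_cast hd)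
    omega⟩

/-- Circular shift: `(S_ℓ x)(n) = x(((n + ℓ - 1) mod d) + 1)` in 1-based indexing. -/
def shift {d : ℕ} (ℓ : ℤ) (x : Fin d → ℂ) : Fin d → ℂ :=
  fun i => x (intToFin d i.pos ((i : ℤ) + ℓ))

/-- `⟨u,v⟩ = ∑ u(n) conj(v(n))`. -/
def innerC {d : ℕ} (u v : Fin d → ℂ) : ℂ := ∑ n, u n * (starRingEnd ℂ) (v n)

/-- `x ∼ x'` iff `x = e^{iθ} x'` for some real `θ`. -/
def phaseEquiv {d : ℕ} (x x' : Fin d → ℂ) : Prop :=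
  ∃ θ : ℝ, x = fun n => Complex.exp (θ * Complex.I) * x' n

/-- Euclidean norm on `ℂ^d`. -/
def norm2 {d : ℕ} (x : Fin d → ℂ) : ℝ := Real.sqrt (∑ n, ‖x n‖ ^ 2)

/-- `D₂(x,x') = min_θ ‖x - e^{iθ} x'‖₂`. -/
def D2 {d : ℕ} (x x' : Fin d → ℂ) : ℝ :=
  ⨅ θ : ℝ, norm2 (fun n => x n - Complex.exp (θ * Complex.I) * x' n)

/-- `C_{p,q} = {x : p ≤ |x(n)| ≤ q for all n}`. -/
def Cpq (d : ℕ) (p q : ℝ) : Set (Fin d → ℂ) :=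
  {x | ∀ n, p ≤ ‖x n‖ ∧ ‖x n‖ ≤ q}

/-- `‖m‖_∞ = max_k ‖m_k‖_∞`. -/
def maskSup {d K : ℕ} (m : Fin K → Fin d → ℂ) : ℝ :=
  ⨆ k, ⨆ n, ‖m k n‖

/-- The measurement map `Z(x)_{k,ℓ} = |⟨S_{ℓa} m_k, x⟩|`, `1 ≤ k ≤ K`, `1 ≤ ℓ ≤ L`. -/
def Zmap {d K : ℕ} (L : ℕ) (m : Fin K → Fin d → ℂ) (a : ℕ) (x : Fin d → ℂ) :
    EuclideanSpace ℝ (Fin K × Fin L) :=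
  WithLp.toLp 2 (fun kl : Fin K × Fin L => ‖innerC (shift ((((kl.2 : ℕ) + 1) * a : ℕ) : ℤ) (m kl.1)) x‖)

/-- The measurement map `Y(x)_{k,ℓ} = |⟨S_{ℓa} m_k, x⟩|²`. -/
def Ymap {d K : ℕ} (L : ℕ) (m : Fin K → Fin d → ℂ) (a : ℕ) (x : Fin d → ℂ) :
    EuclideanSpace ℝ (Fin K × Fin L) :=
  WithLp.toLp 2 (fun kl : Fin K × Fin L => ‖innerC (shift ((((kl.2 : ℕ) + 1) * a : ℕ) : ℤ) (m kl.1)) x‖ ^ 2)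

/-- The vectors `x^{±}` (sign `ε = ±1`): `q` on positions `1,…,d/2-δ`, `p` on
`d/2-δ+1,…,d/2`, `±q` on `d/2+1,…,d-δ`, and `p` on `d-δ+1,…,d`. -/
def xpm (d δ : ℕ) (p q ε : ℝ) : Fin d → ℂ :=
  fun i => if (i : ℕ) < d / 2 - δ then (q : ℂ)
    else if (i : ℕ) < d / 2 then (p : ℂ)
    else if (i : ℕ) < d - δ then ((ε * q : ℝ) : ℂ)
    else (p : ℂ)

/-- The difference of outer products `x x^* - x' x'^*`. -/
def outerDiff {d : ℕ} (x x' : Fin d → ℂ) : Matrix (Fin d) (Fin d) ℂ :=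
  Matrix.of fun i j => x i * star (x j) - x' i * star (x' j)

lemma outerDiff_isHermitian {d : ℕ} (x x' : Fin d → ℂ) :
    (outerDiff x x').IsHermitian := by
  unfold Matrix.IsHermitian
  ext i j
  simp [outerDiff, Matrix.conjTranspose_apply, star_sub, star_mul, star_star, mul_comm]

/-- `d₁(x,x') = ‖x x^* - x' x'^*‖₁`, the sum of the singular values (for a Hermitian
matrix, the sum of the absolute values of its eigenvalues). -/
def d1 {d : ℕ} (x x' : Fin d → ℂ) : ℝ :=
  ∑ i, |(outerDiff_isHermitian x x').eigenvalues i|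


private lemma key_abs (θ a b : ℝ) :
    ‖(a:ℂ) - Complex.exp (θ * Complex.I) * (b:ℂ)‖^2
      = a^2 + b^2 - 2*a*b*Real.cos θ := by
  rw [Complex.sq_norm, Complex.exp_mul_I]
  simp [Complex.normSq_apply, Complex.cos_ofReal_re, Complex.sin_ofReal_re]
  nlinarith [Real.sin_sq_add_cos_sq θ]

private lemma sum_lb (d δ : ℕ) (p q : ℝ) (hd0 : 0 < d) (hd : Even d) (hδ : 0 < δ)
    (hδd : 4 * δ ≤ d) (hp : 0 < p) (hpq : p ≤ q) (θ : ℝ) :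
    (d : ℝ) * q ^ 2 ≤
      ∑ n, ‖xpm d δ p q 1 n
        - Complex.exp (θ * Complex.I) * xpm d δ p q (-1) n‖ ^ 2 := by
  have hq : 0 < q := lt_of_lt_of_le hp hpq
  have hd2 : 2 * (d / 2) = d := by
    obtain ⟨k, hk⟩ := hd; omega
  set c := Real.cos θ with hc
  have hc1 : c ≤ 1 := Real.cos_le_one θ
  have hc2 : -1 ≤ c := Real.neg_one_le_cos θ
  have hterm : ∀ i : Fin d,
      ((if (i:ℕ) < d/2 - δ then 2*q^2*(1-c) else (0:ℝ)) +
       (if d/2 ≤ (i:ℕ) ∧ (i:ℕ) < d - δ then 2*q^2*(1+c) else 0)) ≤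
      ‖xpm d δ p q 1 i
        - Complex.exp (θ * Complex.I) * xpm d δ p q (-1) i‖ ^ 2 := by
    intro i
    rcases lt_or_ge (i:ℕ) (d/2 - δ) with h1 | h1
    · have hnot : ¬ (d/2 ≤ (i:ℕ) ∧ (i:ℕ) < d - δ) := by omega
      simp only [xpm, if_pos h1, if_neg hnot, one_mul]
      rw [key_abs]
      nlinarith
    · rcases lt_or_ge (i:ℕ) (d/2) with h2 | h2
      · have hnot : ¬ (d/2 ≤ (i:ℕ) ∧ (i:ℕ) < d - δ) := by omega
        simp only [xpm, if_neg (not_lt.mpr h1), if_pos h2, if_neg hnot]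
        rw [add_zero]
        positivity
      · rcases lt_or_ge (i:ℕ) (d - δ) with h3 | h3
        · have hyes : d/2 ≤ (i:ℕ) ∧ (i:ℕ) < d - δ := ⟨h2, h3⟩
          have h1' : ¬ (i:ℕ) < d/2 - δ := by omega
          simp only [xpm, if_neg h1', if_neg (not_lt.mpr h2), if_pos h3,
            if_pos hyes, one_mul]
          rw [key_abs]
          nlinarith
        · have hnot : ¬ (d/2 ≤ (i:ℕ) ∧ (i:ℕ) < d - δ) := by omega
          have h1' : ¬ (i:ℕ) < d/2 - δ := by omega
          simp only [xpm, if_neg h1', if_neg hnot]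
          rw [add_zero]
          positivity
  have hsum := Finset.sum_le_sum (s := Finset.univ) (fun i _ => hterm i)
  refine le_trans ?_ hsum
  rw [Finset.sum_add_distrib]
  have e1 : ∑ i : Fin d, (if (i:ℕ) < d/2 - δ then 2*q^2*(1-c) else (0:ℝ))
      = ((d/2 - δ : ℕ) : ℝ) * (2*q^2*(1-c)) := by
    rw [Fin.sum_univ_eq_sum_range (fun i => if i < d/2 - δ then 2*q^2*(1-c) else (0:ℝ)) d]
    rw [← Finset.sum_filter]
    have : (Finset.range d).filter (fun i => i < d/2 - δ) = Finset.range (d/2 - δ) := by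
      ext i; simp only [Finset.mem_filter, Finset.mem_range]; omega
    rw [this, Finset.sum_const, Finset.card_range, nsmul_eq_mul]
  have e2 : ∑ i : Fin d, (if d/2 ≤ (i:ℕ) ∧ (i:ℕ) < d - δ then 2*q^2*(1+c) else (0:ℝ))
      = ((d/2 - δ : ℕ) : ℝ) * (2*q^2*(1+c)) := by
    rw [Fin.sum_univ_eq_sum_range (fun i => if d/2 ≤ i ∧ i < d - δ then 2*q^2*(1+c) else (0:ℝ)) d]
    rw [← Finset.sum_filter]
    have : (Finset.range d).filter (fun i => d/2 ≤ i ∧ i < d - δ)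
        = Finset.Ico (d/2) (d - δ) := by
      ext i; simp only [Finset.mem_filter, Finset.mem_range, Finset.mem_Ico]; omega
    rw [this, Finset.sum_const, Nat.card_Ico, nsmul_eq_mul]
    congr 2
    omega
  rw [e1, e2]
  have hcard : (d : ℝ) ≤ 4 * ((d/2 - δ : ℕ) : ℝ) := by
    have : d ≤ 4 * (d/2 - δ) := by omega
    exact_mod_cast this
  nlinarith [sq_nonneg q]

/-- `D₂(x⁺, x⁻) ≥ q√d`: for every `θ`, `‖x⁺ - e^{iθ}x⁻‖₂² ≥ dq²`. -/
theorem D2_lower_bound (d δ : ℕ) (p q : ℝ) (hd0 : 0 < d) (hd : Even d) (hδ : 0 < δ)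
    (hδd : 4 * δ ≤ d) (hp : 0 < p) (hpq : p ≤ q) :
    q * Real.sqrt d ≤ D2 (xpm d δ p q 1) (xpm d δ p q (-1)) ∧
    ∀ θ : ℝ, (d : ℝ) * q ^ 2 ≤
      ∑ n, ‖xpm d δ p q 1 n
        - Complex.exp (θ * Complex.I) * xpm d δ p q (-1) n‖ ^ 2 := by
  have hq : 0 < q := lt_of_lt_of_le hp hpq
  constructor
  · rw [D2]
    apply le_ciInf
    intro θ
    rw [norm2]
    have h := sum_lb d δ p q hd0 hd hδ hδd hp hpq θ
    have heq : q * Real.sqrt d = Real.sqrt ((d:ℝ) * q^2) := by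
      rw [Real.sqrt_mul (by positivity), Real.sqrt_sq hq.le]; ring
    rw [heq]
    exact Real.sqrt_le_sqrt h
  · exact sum_lb d δ p q hd0 hd hδ hδd hp hpq
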